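/- Let n ≥ 1, k ≥ 1, l ≤ k, let O be an n×k column-incidence matrix (viewed as a real matrix), and let P_{lk} be the l×k truncation matrix. Then Σ_{σ ∈ Sym(n)} Σ_{π ∈ Sym(k)} P_σ·O·P_π·P_{lk}ᵀ = (n−1)!·k!·J_{n×l}, where J_{n×l} is the all-ones n×l matrix; equivalently, the average of P_σ·O·P_π·P_{lk}ᵀ over all pairs of permutations equals (1/n)·J_{n×l}. -/

import Mathlib

open Matrix BigOperators

/-- A column-incidence matrix: a 0-1 matrix with exactly one 1 in each column. -/
def IsColIncidence {n k : ℕ} (M : Matrix (Fin n) (Fin k) ℝ) : Prop :=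
  (∀ i j, M i j = 0 ∨ M i j = 1) ∧ (∀ j, ∃! i, M i j = 1)

/-- The permutation matrix of a permutation `σ`. -/
def permMat {n : ℕ} (σ : Equiv.Perm (Fin n)) : Matrix (Fin n) (Fin n) ℝ :=
  Matrix.of fun i j => if σ j = i then 1 else 0

/-- The `l × k` truncation matrix `(I_l 0)`. -/
def trunc (l k : ℕ) : Matrix (Fin l) (Fin k) ℝ :=
  Matrix.of fun i j => if (i : ℕ) = (j : ℕ) then 1 else 0

lemma perm_sum {m : ℕ} (hm : 1 ≤ m) (g : Fin m → ℝ) (x : Fin m) :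
    ∑ σ : Equiv.Perm (Fin m), g (σ x) = ((m - 1).factorial : ℝ) * ∑ a, g a := by
  obtain ⟨m, rfl⟩ := Nat.exists_eq_succ_of_ne_zero (by omega : m ≠ 0)
  have h0 : ∑ σ : Equiv.Perm (Fin (m + 1)), g (σ x)
      = ∑ σ : Equiv.Perm (Fin (m + 1)), g (σ 0) := by
    have := Equiv.sum_comp (Equiv.mulRight (Equiv.swap x 0) : Equiv.Perm (Fin (m+1)) ≃ _)
      (fun σ => g (σ x))
    rw [← this]
    apply Finset.sum_congr rfl
    intro σ _
    simp [Equiv.Perm.mul_apply]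
  rw [h0, ← Equiv.sum_comp (Equiv.Perm.decomposeFin.symm) (fun σ => g (σ 0))]
  rw [Fintype.sum_prod_type]
  simp only [Equiv.Perm.decomposeFin_symm_apply_zero, Finset.sum_const, Fintype.card_perm,
    nsmul_eq_mul, Finset.card_univ, Nat.succ_sub_one]
  rw [← Finset.mul_sum]
  simp

lemma permMat_mul_apply {n k : ℕ} (σ : Equiv.Perm (Fin n)) (A : Matrix (Fin n) (Fin k) ℝ)
    (i : Fin n) (j : Fin k) : (permMat σ * A) i j = A (σ⁻¹ i) j := by
  simp only [Matrix.mul_apply, permMat, Matrix.of_apply, ite_mul, one_mul, zero_mul]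
  rw [Finset.sum_congr rfl (fun a _ =>
    if_congr (Equiv.apply_eq_iff_eq_symm_apply σ) rfl rfl)]
  simp [Equiv.Perm.inv_def]

lemma mul_permMat_apply {n k : ℕ} (π : Equiv.Perm (Fin k)) (A : Matrix (Fin n) (Fin k) ℝ)
    (i : Fin n) (j : Fin k) : (A * permMat π) i j = A i (π j) := by
  simp only [Matrix.mul_apply, permMat, Matrix.of_apply, mul_ite, mul_one, mul_zero]
  simp [eq_comm]

lemma mul_truncT_apply {n k l : ℕ} (hlk : l ≤ k) (A : Matrix (Fin n) (Fin k) ℝ)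
    (i : Fin n) (j : Fin l) : (A * (trunc l k)ᵀ) i j = A i (Fin.castLE hlk j) := by
  simp only [Matrix.mul_apply, trunc, Matrix.transpose_apply, Matrix.of_apply, mul_ite,
    mul_one, mul_zero]
  have hiff : ∀ c : Fin k, ((j : ℕ) = (c : ℕ)) ↔ (c = Fin.castLE hlk j) := by
    intro c
    constructor
    · intro h; exact Fin.ext (by simp [← h])
    · intro h; subst h; simp
  rw [Finset.sum_congr rfl (fun c _ => if_congr (hiff c) rfl rfl)]
  simp

theorem stmt_16 {n k l : ℕ} (hn : 1 ≤ n) (hk : 1 ≤ k) (hlk : l ≤ k)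
    (O : Matrix (Fin n) (Fin k) ℝ) (hO : IsColIncidence O) :
    ∑ σ : Equiv.Perm (Fin n), ∑ π : Equiv.Perm (Fin k),
        permMat σ * O * permMat π * (trunc l k)ᵀ
      = (((n - 1).factorial * k.factorial : ℕ) : ℝ) •
          (Matrix.of fun (_ : Fin n) (_ : Fin l) => (1 : ℝ)) := by
  ext i j
  simp only [Matrix.sum_apply, Matrix.smul_apply, Matrix.of_apply, smul_eq_mul, mul_one]
  have hentry : ∀ (σ : Equiv.Perm (Fin n)) (π : Equiv.Perm (Fin k)),
      (permMat σ * O * permMat π * (trunc l k)ᵀ) i j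
        = O (σ⁻¹ i) (π (Fin.castLE hlk j)) := by
    intro σ π
    rw [mul_truncT_apply hlk, mul_permMat_apply, permMat_mul_apply]
  calc ∑ σ : Equiv.Perm (Fin n), ∑ π : Equiv.Perm (Fin k),
        (permMat σ * O * permMat π * (trunc l k)ᵀ) i j
      = ∑ σ : Equiv.Perm (Fin n), ((k - 1).factorial : ℝ) * ∑ b, O (σ⁻¹ i) b := by
        apply Finset.sum_congr rfl; intro σ _
        rw [Finset.sum_congr rfl (fun π _ => hentry σ π)]
        exact perm_sum hk (fun b => O (σ⁻¹ i) b) (Fin.castLE hlk j)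
    _ = ((k - 1).factorial : ℝ) * ∑ σ : Equiv.Perm (Fin n), ∑ b, O (σ⁻¹ i) b := by
        rw [Finset.mul_sum]
    _ = ((k - 1).factorial : ℝ) * ∑ σ : Equiv.Perm (Fin n), ∑ b, O (σ i) b := by
        congr 1
        exact Equiv.sum_comp (Equiv.inv (Equiv.Perm (Fin n))) (fun σ => ∑ b, O (σ i) b)
    _ = ((k - 1).factorial : ℝ) * (((n - 1).factorial : ℝ) * ∑ a, ∑ b, O a b) := by
        rw [perm_sum hn (fun a => ∑ b, O a b) i]
    _ = ((k - 1).factorial : ℝ) * (((n - 1).factorial : ℝ) * k) := by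
        congr 2
        rw [show ∑ a : Fin n, ∑ b : Fin k, O a b = ∑ b : Fin k, ∑ a : Fin n, O a b from Finset.sum_comm]
        have hcol : ∀ b : Fin k, ∑ a, O a b = 1 := by
          intro b
          obtain ⟨i₀, hi₀, huniq⟩ := hO.2 b
          rw [Finset.sum_eq_single i₀]
          · exact hi₀
          · intro a _ ha
            rcases hO.1 a b with h | h
            · exact h
            · exact absurd (huniq a h) ha
          · simp
        simp [hcol]
    _ = (((n - 1).factorial * k.factorial : ℕ) : ℝ) := by
        have hkf : (k : ℝ) * ((k - 1).factorial : ℝ) = (k.factorial : ℝ) := by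
          exact_mod_cast congrArg (Nat.cast : ℕ → ℝ) (Nat.mul_factorial_pred (by omega))
        push_cast
        nlinarith [hkf]
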